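/- arXiv:1103.4424 — 4 statements merged into one kernel-verified Lean document; each statement's English description precedes it below -/
import Mathlib

section
/- Let G be a countably infinite group and let C ≤ G be a finite cyclic subgroup of prime order whose normalizer N(C) = {g ∈ G : gCg⁻¹ = C} has infinite index in G. Let (K, κ) be a standard probability space with H(K, κ) > 0. Then the generalized Bernoulli shift G ↷ (K^{G/C}, κ^{G/C}) is essentially free: for every g ∈ G with g ≠ e, the set {x ∈ K^{G/C} : g·x = x} has κ^{G/C}-measure zero. -/
open MeasureTheory ENNReal Classical

/-- The Shannon entropy of a probability space `(K, κ)`: if the measure is supported on a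
countable set, it is `-∑ κ({k}) log κ({k})`; otherwise it is `+∞`. -/

noncomputable def shannonEntropy {K : Type*} [MeasurableSpace K] (κ : Measure K) : ℝ≥0∞ :=
  if ∃ S : Set K, S.Countable ∧ κ S = 1 then
    ∑' k : K, ENNReal.ofReal (-((κ {k}).toReal * Real.log (κ {k}).toReal))
  else ⊤

/-- `(K, κ)` is a two-atom space if `κ` is supported on two atoms. -/
def IsTwoAtomSpace {K : Type*} [MeasurableSpace K] (κ : Measure K) : Prop :=
  ∃ k₀ k₁ : K, κ {k₀, k₁} = 1

/-- The Bernoulli shift action of `G` on `K^G`: `(g x)(f) = x(g⁻¹ f)`. -/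
def bernoulliShift {G K : Type*} [Group G] (g : G) (x : G → K) : G → K :=
  fun f => x (g⁻¹ * f)

/-- `μ` is the product measure `κ^ι` on `K^ι`, characterized on cylinder sets. -/
def IsProductMeasure {ι K : Type*} [MeasurableSpace K] (κ : Measure K)
    (μ : Measure (ι → K)) : Prop :=
  IsProbabilityMeasure μ ∧
  ∀ (s : Finset ι) (A : ι → Set K), (∀ i ∈ s, MeasurableSet (A i)) →
    μ {x | ∀ i ∈ s, x i ∈ A i} = ∏ i ∈ s, κ (A i)

/-- The Bernoulli shifts `G ↷ (K^G, κG)` and `G ↷ (L^G, lamG)` are isomorphic: there is a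
measurable, measure-preserving, a.e. shift-equivariant map with a measurable a.e. inverse. -/
def IsBernoulliIso {G K L : Type*} [Group G] [MeasurableSpace K] [MeasurableSpace L]
    (κG : Measure (G → K)) (lamG : Measure (G → L)) : Prop :=
  ∃ φ : (G → K) → (G → L), Measurable φ ∧ Measure.map φ κG = lamG ∧
    (∀ g : G, ∀ᵐ x ∂κG, φ (bernoulliShift g x) = bernoulliShift g (φ x)) ∧
    ∃ ψ : (G → L) → (G → K), Measurable ψ ∧
      (∀ᵐ x ∂κG, ψ (φ x) = x) ∧ (∀ᵐ y ∂lamG, φ (ψ y) = y)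




-- Auxiliary lemmas

lemma exists_atom_of_zero_one {K : Type*} [MeasurableSpace K] [StandardBorelSpace K]
    (κ : Measure K) [IsProbabilityMeasure κ]
    (h01 : ∀ A : Set K, MeasurableSet A → κ A = 0 ∨ κ A = 1) : ∃ k : K, κ {k} = 1 := by
  obtain ⟨f, hf⟩ := MeasureTheory.exists_measurableEmbedding_real K
  set ν : Measure ℝ := Measure.map f κ with hν
  haveI : IsProbabilityMeasure ν := Measure.isProbabilityMeasure_map hf.measurable.aemeasurable
  have hν01 : ∀ A : Set ℝ, MeasurableSet A → ν A = 0 ∨ ν A = 1 := by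
    intro A hA
    rw [hν, Measure.map_apply hf.measurable hA]
    exact h01 _ (hf.measurable hA)
  -- union of null basic sets
  set Bas := TopologicalSpace.countableBasis ℝ
  set U : Set ℝ := ⋃₀ {t ∈ Bas | ν t = 0} with hU
  have hUnull : ν U = 0 := by
    rw [hU, measure_sUnion_null_iff ((TopologicalSpace.countable_countableBasis ℝ).mono
      (Set.sep_subset _ _))]
    exact fun t ht => ht.2
  have hopen_null_subset : ∀ V : Set ℝ, IsOpen V → ν V = 0 → V ⊆ U := by
    intro V hV hV0 y hy
    obtain ⟨t, htB, hyt, htV⟩ := (TopologicalSpace.isBasis_countableBasis ℝ).exists_subset_of_mem_open hy hV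
    exact Set.mem_sUnion.2 ⟨t, ⟨htB, le_antisymm (hV0 ▸ measure_mono htV) zero_le⟩, hyt⟩
  have hZsub : Set.Subsingleton Uᶜ := by
    intro z₁ hz₁ z₂ hz₂
    by_contra hne
    obtain ⟨V₁, V₂, hV₁, hV₂, hz₁V, hz₂V, hdisj⟩ := t2_separation hne
    have h1 : ν V₁ = 1 := by
      rcases hν01 V₁ hV₁.measurableSet with h | h
      · exact absurd (hopen_null_subset _ hV₁ h hz₁V) hz₁
      · exact h
    have h2 : ν V₂ = 1 := by
      rcases hν01 V₂ hV₂.measurableSet with h | h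
      · exact absurd (hopen_null_subset _ hV₂ h hz₂V) hz₂
      · exact h
    have := measure_union hdisj hV₂.measurableSet (μ := ν)
    have hle : ν (V₁ ∪ V₂) ≤ 1 := prob_le_one
    rw [this, h1, h2] at hle
    norm_num at hle
  have hZ1 : ν Uᶜ = 1 := by
    have hUmeas : MeasurableSet U :=
      (isOpen_sUnion (fun t ht => TopologicalSpace.isOpen_of_mem_countableBasis ht.1)).measurableSet
    rw [prob_compl_eq_one_sub hUmeas, hUnull, tsub_zero]
  have hne : Uᶜ.Nonempty := by
    rcases Set.eq_empty_or_nonempty Uᶜ with h | h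
    · rw [h] at hZ1; simp at hZ1
    · exact h
  obtain ⟨z, hz⟩ := hne
  have hsingle : Uᶜ ⊆ {z} := fun w hw => hZsub hw hz
  have hνz : ν {z} = 1 := le_antisymm prob_le_one (hZ1 ▸ measure_mono hsingle)
  have hκ : κ (f ⁻¹' {z}) = 1 := by
    rw [hν, Measure.map_apply hf.measurable (measurableSet_singleton z)] at hνz
    exact hνz
  have hpre : (f ⁻¹' {z}).Nonempty := by
    rcases Set.eq_empty_or_nonempty (f ⁻¹' {z}) with h | h
    · rw [h] at hκ; simp at hκ
    · exact h
  obtain ⟨k, hk⟩ := hpre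
  refine ⟨k, le_antisymm prob_le_one ?_⟩
  have : f ⁻¹' {z} ⊆ {k} := by
    intro w hw
    exact hf.injective (by simpa using hw.trans hk.symm ▸ rfl)
  calc (1:ℝ≥0∞) = κ (f ⁻¹' {z}) := hκ.symm
  _ ≤ κ {k} := measure_mono this

lemma exists_good_set {K : Type*} [MeasurableSpace K] [StandardBorelSpace K]
    (κ : Measure K) [IsProbabilityMeasure κ] (hK : 0 < shannonEntropy κ) :
    ∃ B : Set K, MeasurableSet B ∧ 0 < κ B ∧ κ B < 1 := by
  by_cases hc : ∃ S : Set K, S.Countable ∧ κ S = 1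
  · rw [shannonEntropy, if_pos hc] at hK
    have : ∃ k : K, ENNReal.ofReal (-((κ {k}).toReal * Real.log (κ {k}).toReal)) ≠ 0 := by
      by_contra h
      push_neg at h
      rw [tsum_congr (fun k => h k), tsum_zero] at hK
      exact lt_irrefl 0 hK
    obtain ⟨k, hk⟩ := this
    have hpos : 0 < -((κ {k}).toReal * Real.log (κ {k}).toReal) := by
      by_contra h
      exact hk (ENNReal.ofReal_eq_zero.2 (not_lt.1 h))
    set p := (κ {k}).toReal with hp
    have hmul : p * Real.log p < 0 := by linarith
    have hp0 : 0 < p := by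
      rcases eq_or_lt_of_le (ENNReal.toReal_nonneg (a := κ {k})) with h | h
      · rw [hp, ← h] at hmul; simp at hmul
      · exact h
    have hlog : Real.log p < 0 := by
      by_contra h
      push_neg at h
      nlinarith
    have hp1 : p < 1 := (Real.log_neg_iff hp0).1 hlog
    refine ⟨{k}, measurableSet_singleton k, ?_, ?_⟩
    · rw [pos_iff_ne_zero]
      intro h
      rw [hp, h] at hp0; simp at hp0
    · have := (ENNReal.toReal_lt_toReal (measure_ne_top κ {k}) (one_ne_top)).1 (by simpa using hp1)
      simpa using this
  · by_contra hB
    push_neg at hB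
    have h01 : ∀ A : Set K, MeasurableSet A → κ A = 0 ∨ κ A = 1 := by
      intro A hA
      rcases eq_or_ne (κ A) 0 with h | h
      · exact Or.inl h
      · exact Or.inr (le_antisymm prob_le_one (hB A hA (pos_iff_ne_zero.2 h)))
    obtain ⟨k, hk⟩ := exists_atom_of_zero_one κ h01
    exact hc ⟨{k}, Set.countable_singleton k, hk⟩


lemma zpowers_eq_of_prime {G : Type*} [Group G] (C : Subgroup G) (hprime : (Nat.card C).Prime)
    (c : G) (hc : c ∈ C) (hc1 : c ≠ 1) : Subgroup.zpowers c = C := by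
  haveI : Finite C := Nat.finite_of_card_ne_zero hprime.ne_zero
  set c' : C := ⟨c, hc⟩ with hc'
  have hc'1 : c' ≠ 1 := fun h => hc1 (by simpa [hc'] using congrArg Subtype.val h)
  have hord : orderOf c' = Nat.card C := by
    rcases hprime.eq_one_or_self_of_dvd _ (orderOf_dvd_natCard c') with h | h
    · exact absurd (orderOf_eq_one_iff.1 h) hc'1
    · exact h
  have htop : Subgroup.zpowers c' = ⊤ :=
    Subgroup.eq_top_of_card_eq _ (by rw [Nat.card_zpowers, hord])
  apply le_antisymm
  · rwa [Subgroup.zpowers_le]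
  · intro x hx
    have : (⟨x, hx⟩ : C) ∈ Subgroup.zpowers c' := htop ▸ Subgroup.mem_top _
    obtain ⟨n, hn⟩ := this
    exact ⟨n, by simpa [hc'] using congrArg Subtype.val hn⟩

lemma moved_cosets_infinite {G : Type*} [Group G] [Infinite G]
    (C : Subgroup G) (hprime : (Nat.card C).Prime)
    (hnorm : Infinite (G ⧸ Subgroup.normalizer (C : Set G))) (g : G) (hg : g ≠ 1) :
    {q : G ⧸ C | g⁻¹ • q ≠ q}.Infinite := by
  haveI : Finite C := Nat.finite_of_card_ne_zero hprime.ne_zero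
  set N := Subgroup.normalizer (C : Set G) with hN
  set Fix : Set G := {f : G | f⁻¹ * g * f ∈ C} with hFix
  -- any two conjugators differ by a normalizer element
  have hsub : ∀ f₀ ∈ Fix, Fix ⊆ (fun f => f₀⁻¹ * f) ⁻¹' (N : Set G) := by
    intro f₀ h₀ f hf
    set h := f₀⁻¹ * f with hh
    have hc1 : f⁻¹ * g * f ≠ 1 := by
      intro hcon
      apply hg
      have := congrArg (fun y => f * y * f⁻¹) hcon
      simpa [mul_assoc] using this
    have hc01 : f₀⁻¹ * g * f₀ ≠ 1 := by
      intro hcon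
      apply hg
      have := congrArg (fun y => f₀ * y * f₀⁻¹) hcon
      simpa [mul_assoc] using this
    have hCc : Subgroup.zpowers (f⁻¹ * g * f) = C := zpowers_eq_of_prime C hprime _ hf hc1
    have hCc0 : Subgroup.zpowers (f₀⁻¹ * g * f₀) = C := zpowers_eq_of_prime C hprime _ h₀ hc01
    have key : h * (f⁻¹ * g * f) * h⁻¹ = f₀⁻¹ * g * f₀ := by
      rw [hh]; group
    have key' : h⁻¹ * (f₀⁻¹ * g * f₀) * h = f⁻¹ * g * f := by
      rw [hh]; group
    show h ∈ N
    rw [hN, Subgroup.mem_normalizer_iff]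
    intro x
    constructor
    · intro hx
      rw [← hCc] at hx
      obtain ⟨n, hn⟩ := hx
      rw [← hn, ← conj_zpow, key]
      exact C.zpow_mem h₀ n
    · intro hx
      rw [← hCc0] at hx
      obtain ⟨n, hn⟩ := hx
      have h4 : h * (f⁻¹ * g * f) ^ n * h⁻¹ = h * x * h⁻¹ := by
        rw [← conj_zpow, key]; exact hn
      have h5 : (f⁻¹ * g * f) ^ n = x := mul_left_cancel (mul_right_cancel h4)
      exact h5 ▸ C.zpow_mem hf n
  -- the set of non-conjugators is infinite
  have hA' : {f : G | f⁻¹ * g * f ∉ C}.Infinite := by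
    by_cases hex : ∃ f₀, f₀ ∈ Fix
    · obtain ⟨f₀, h₀⟩ := hex
      have hNc : ((N : Set G)ᶜ).Infinite := by
        have h1 : ({((1:G) : G ⧸ N)}ᶜ : Set (G ⧸ N)).Infinite :=
          (Set.finite_singleton _).infinite_compl
        have : (QuotientGroup.mk ⁻¹' ({((1:G) : G ⧸ N)}ᶜ : Set (G ⧸ N))).Infinite :=
          h1.preimage (by rw [Set.range_eq_univ.2 (QuotientGroup.mk_surjective)]; exact Set.subset_univ _)
        have heq : QuotientGroup.mk ⁻¹' ({((1:G) : G ⧸ N)}ᶜ : Set (G ⧸ N)) = (N : Set G)ᶜ := by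
          ext f
          simp only [Set.mem_preimage, Set.mem_compl_iff, Set.mem_singleton_iff, SetLike.mem_coe]
          rw [QuotientGroup.eq]
          simp
        rwa [heq] at this
      have hpre : ((fun f => f₀⁻¹ * f) ⁻¹' ((N : Set G)ᶜ)).Infinite := by
        apply hNc.preimage
        intro y hy
        exact ⟨f₀ * y, by simp⟩
      apply hpre.mono
      intro f hf
      simp only [Set.mem_preimage, Set.mem_compl_iff] at hf
      intro hfC
      exact hf (hsub f₀ h₀ hfC)
    · push_neg at hex
      have : {f : G | f⁻¹ * g * f ∉ C} = Set.univ := by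
        ext f; simpa [hFix] using hex f
      rw [this]
      exact Set.infinite_univ
  -- push to the quotient
  have himg : (QuotientGroup.mk '' {f : G | f⁻¹ * g * f ∉ C} : Set (G ⧸ C)).Infinite := by
    intro hfin
    apply hA'
    have hfib : ∀ q ∈ (QuotientGroup.mk '' {f : G | f⁻¹ * g * f ∉ C} : Set (G ⧸ C)),
        ((QuotientGroup.mk : G → G ⧸ C) ⁻¹' {q}).Finite := by
      intro q _
      obtain ⟨a, rfl⟩ := QuotientGroup.mk_surjective q
      have : (QuotientGroup.mk : G → G ⧸ C) ⁻¹' {(a : G ⧸ C)} = (fun c => a * c) '' (C : Set G) := by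
        ext f
        simp only [Set.mem_preimage, Set.mem_singleton_iff, Set.mem_image]
        constructor
        · intro hfq
          have := QuotientGroup.eq.1 hfq.symm
          exact ⟨a⁻¹ * f, this, by group⟩
        · rintro ⟨c, hcC, rfl⟩
          exact (QuotientGroup.eq.2 (by simpa using hcC)).symm
      rw [this]
      exact (Set.toFinite (C : Set G)).image _
    exact (hfin.preimage' hfib).subset (Set.subset_preimage_image _ _)
  apply himg.mono
  rintro q ⟨f, hf, rfl⟩
  simp only [Set.mem_setOf_eq]
  intro hcon
  apply hf
  have : ((g⁻¹ * f : G) : G ⧸ C) = (f : G ⧸ C) := hcon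
  have h2 := QuotientGroup.eq.1 this
  have : f⁻¹ * g * f ∈ C := by
    have h3 : (g⁻¹ * f)⁻¹ * f = f⁻¹ * g * f := by group
    rw [← h3]
    exact h2
  exact this


lemma exists_inj_pairs {α : Type*} (T : α ≃ α) (S : Set α) (hS : S.Infinite)
    (hT : ∀ q ∈ S, T q ≠ q) (n : ℕ) :
    ∃ Q : Fin n × Bool → α, Function.Injective Q ∧
      (∀ i : Fin n, Q (i, true) ∈ S) ∧ (∀ i : Fin n, Q (i, false) = T (Q (i, true))) := by
  induction n with
  | zero =>
    exact ⟨fun p => p.1.elim0, fun p => p.1.elim0, fun i => i.elim0, fun i => i.elim0⟩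
  | succ n ih =>
    obtain ⟨Q, hinj, hmem, hpair⟩ := ih
    have hbad : (Set.range Q ∪ T.symm '' Set.range Q).Finite :=
      (Set.finite_range Q).union ((Set.finite_range Q).image _)
    obtain ⟨q', hq'⟩ := (hS.diff hbad).nonempty
    have hq'S : q' ∈ S := hq'.1
    have hq'r : q' ∉ Set.range Q := fun h => hq'.2 (Or.inl h)
    have hTq'r : T q' ∉ Set.range Q := fun h =>
      hq'.2 (Or.inr ⟨T q', h, by simp⟩)
    refine ⟨fun p => Fin.lastCases (if p.2 then q' else T q') (fun j => Q (j, p.2)) p.1,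
      ?_, ?_, ?_⟩
    · rintro ⟨i, b⟩ ⟨j, c⟩ h
      rcases Fin.eq_castSucc_or_eq_last i with ⟨i', rfl⟩ | rfl <;>
        rcases Fin.eq_castSucc_or_eq_last j with ⟨j', rfl⟩ | rfl
      · simp only [Fin.lastCases_castSucc] at h
        have := hinj h
        simp only [Prod.mk.injEq] at this ⊢
        exact ⟨congrArg Fin.castSucc this.1, this.2⟩
      · simp only [Fin.lastCases_castSucc, Fin.lastCases_last] at h
        exfalso
        cases c
        · simp only [if_neg Bool.false_ne_true] at h
          exact hTq'r ⟨(i', b), h⟩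
        · simp only [if_pos rfl] at h
          exact hq'r ⟨(i', b), h⟩
      · simp only [Fin.lastCases_castSucc, Fin.lastCases_last] at h
        exfalso
        cases b
        · simp only [if_neg Bool.false_ne_true] at h
          exact hTq'r ⟨(j', c), h.symm⟩
        · simp only [if_pos rfl] at h
          exact hq'r ⟨(j', c), h.symm⟩
      · simp only [Fin.lastCases_last] at h
        cases b <;> cases c
        · rfl
        · exfalso
          simp only [if_neg Bool.false_ne_true, if_pos rfl] at h
          exact hT q' hq'S h
        · exfalso
          simp only [if_neg Bool.false_ne_true, if_pos rfl] at h
          exact hT q' hq'S h.symm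
        · rfl
    · intro i
      rcases Fin.eq_castSucc_or_eq_last i with ⟨i', rfl⟩ | rfl
      · simpa using hmem i'
      · simpa using hq'S
    · intro i
      rcases Fin.eq_castSucc_or_eq_last i with ⟨i', rfl⟩ | rfl
      · simpa using hpair i'
      · simp

lemma sum_prod_bool_pow {M : Type*} [CommSemiring M] (n : ℕ) (h : Bool → M) :
    ∑ ε : Fin n → Bool, ∏ i, h (ε i) = (h true + h false) ^ n := by
  induction n with
  | zero => simp
  | succ n ih =>
    rw [← (Fin.consEquiv (fun _ => Bool)).sum_comp (fun ε => ∏ i, h (ε i))]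
    have hterm : ∀ p : Bool × (Fin n → Bool),
        (∏ i, h (((Fin.consEquiv (fun _ => Bool)) p) i)) = h p.1 * ∏ i, h (p.2 i) := by
      intro p
      rw [Fin.prod_univ_succ]
      simp [Fin.consEquiv]
    rw [Finset.sum_congr rfl (fun p _ => hterm p), Fintype.sum_prod_type]
    simp only [← Finset.mul_sum, ← Finset.sum_mul]
    rw [ih, Fintype.sum_bool]
    ring

/-- **Lemma 5.1.** Let `G` be a countably infinite group and `C ≤ G` a finite cyclic subgroup
of prime order whose normalizer has infinite index in `G`. If `(K, κ)` is a standard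
probability space with `H(K, κ) > 0`, then the generalized Bernoulli shift
`G ↷ (K^{G/C}, κ^{G/C})` is essentially free: every nonidentity `g ∈ G` fixes only a null set
of points. -/
theorem generalized_bernoulli_shift_essentially_free
    (G : Type*) [Group G] [Countable G] [Infinite G]
    (C : Subgroup G) (hcyc : IsCyclic C) (hprime : (Nat.card C).Prime)
    (hnorm : Infinite (G ⧸ Subgroup.normalizer (C : Set G)))
    (K : Type*) [MeasurableSpace K] [StandardBorelSpace K]
    (κ : Measure K) [IsProbabilityMeasure κ] (hK : 0 < shannonEntropy κ)
    (μGC : Measure ((G ⧸ C) → K)) (hμGC : IsProductMeasure κ μGC)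
    (g : G) (hg : g ≠ 1) :
    μGC {x : (G ⧸ C) → K | (fun q => x (g⁻¹ • q)) = x} = 0 := by
  classical
  obtain ⟨B, hBmeas, hB0, hB1⟩ := exists_good_set κ hK
  haveI : IsProbabilityMeasure μGC := hμGC.1
  have hSinf : {q : G ⧸ C | g⁻¹ • q ≠ q}.Infinite := moved_cosets_infinite C hprime hnorm g hg
  set r : ℝ≥0∞ := κ B * κ B + κ Bᶜ * κ Bᶜ with hr
  -- r < 1
  have hsum : κ B + κ Bᶜ = 1 := by
    rw [measure_add_measure_compl hBmeas, measure_univ]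
  have hbc0 : κ Bᶜ ≠ 0 := by
    intro h
    rw [h, add_zero] at hsum
    exact absurd hsum (ne_of_lt hB1)
  have hr1 : r < 1 := by
    have h1 : κ B * κ B < 1 * κ B :=
      ENNReal.mul_lt_mul_left (fun h => (hB0.ne' h).elim) (measure_ne_top κ B) hB1
    have h2 : κ Bᶜ * κ Bᶜ ≤ 1 * κ Bᶜ :=
      mul_le_mul_left prob_le_one _
    calc r < 1 * κ B + κ Bᶜ * κ Bᶜ :=
          ENNReal.add_lt_add_of_lt_of_le
            (ENNReal.mul_ne_top (measure_ne_top κ Bᶜ) (measure_ne_top κ Bᶜ)) h1 le_rfl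
    _ ≤ 1 * κ B + 1 * κ Bᶜ := add_le_add_right h2 _
    _ = 1 := by rw [one_mul, one_mul, hsum]
  -- bound by r ^ n
  have hbound : ∀ n : ℕ, μGC {x : (G ⧸ C) → K | (fun q => x (g⁻¹ • q)) = x} ≤ r ^ n := by
    intro n
    obtain ⟨Q, hQinj, hQmem, hQpair⟩ :=
      exists_inj_pairs (MulAction.toPerm g⁻¹ : Equiv.Perm (G ⧸ C)) {q : G ⧸ C | g⁻¹ • q ≠ q}
        hSinf (fun q hq => hq) n
    have hQpair' : ∀ i : Fin n, Q (i, false) = g⁻¹ • Q (i, true) := fun i => hQpair i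
    set A : (Fin n → Bool) → (G ⧸ C) → Set K := fun ε =>
      Function.extend Q (fun p => if ε p.1 then B else Bᶜ) (fun _ => Set.univ) with hA
    set s : Finset (G ⧸ C) := Finset.image Q Finset.univ with hs
    have hAQ : ∀ ε p, A ε (Q p) = (if ε p.1 then B else Bᶜ) := by
      intro ε p
      rw [hA]
      exact Function.Injective.extend_apply hQinj _ _ _
    set Cyl : (Fin n → Bool) → Set ((G ⧸ C) → K) := fun ε => {x | ∀ i ∈ s, x i ∈ A ε i} with hCyl
    have h1 : {x : (G ⧸ C) → K | (fun q => x (g⁻¹ • q)) = x} ⊆ ⋃ ε : Fin n → Bool, Cyl ε := by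
      intro x hx
      refine Set.mem_iUnion.2 ⟨fun i => if x (Q (i, true)) ∈ B then true else false, ?_⟩
      intro c hc
      obtain ⟨p, _, rfl⟩ := Finset.mem_image.1 hc
      have hval : x (Q p) = x (Q (p.1, true)) := by
        rcases p with ⟨i, b⟩
        cases b
        · rw [hQpair' i]
          exact congrFun hx (Q (i, true))
        · rfl
      have hmem2 : x (Q p) ∈ (if (fun i => if x (Q (i, true)) ∈ B then true else false) p.1 = true
          then B else Bᶜ) := by
        by_cases hxB : x (Q (p.1, true)) ∈ B
        · simp only [if_pos hxB, if_pos rfl]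
          rw [hval]; exact hxB
        · simp only [if_neg hxB, if_neg Bool.false_ne_true]
          rw [hval]; exact hxB
      exact (hAQ (fun i => if x (Q (i, true)) ∈ B then true else false) p).symm ▸ hmem2
    have h2 : ∀ ε : Fin n → Bool, μGC (Cyl ε) = ∏ p : Fin n × Bool, κ (if ε p.1 then B else Bᶜ) := by
      intro ε
      rw [hCyl]
      rw [hμGC.2 s (A ε) ?_]
      · rw [hs, Finset.prod_image (fun a _ b _ h => hQinj h)]
        exact Finset.prod_congr rfl fun p _ => by rw [hAQ]
      · intro i hi
        obtain ⟨p, _, rfl⟩ := Finset.mem_image.1 hi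
        rw [hAQ]
        split_ifs
        · exact hBmeas
        · exact hBmeas.compl
    calc μGC {x : (G ⧸ C) → K | (fun q => x (g⁻¹ • q)) = x}
        ≤ μGC (⋃ ε : Fin n → Bool, Cyl ε) := measure_mono h1
    _ ≤ ∑' ε : Fin n → Bool, μGC (Cyl ε) := measure_iUnion_le _
    _ = ∑ ε : Fin n → Bool, μGC (Cyl ε) := tsum_fintype _
    _ = ∑ ε : Fin n → Bool, ∏ p : Fin n × Bool, κ (if ε p.1 then B else Bᶜ) :=
        Finset.sum_congr rfl fun ε _ => h2 ε
    _ = ∑ ε : Fin n → Bool, ∏ i : Fin n,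
          (κ (if ε i then B else Bᶜ) * κ (if ε i then B else Bᶜ)) := by
        refine Finset.sum_congr rfl fun ε _ => ?_
        rw [Fintype.prod_prod_type]
        exact Finset.prod_congr rfl fun i _ => by rw [Fintype.prod_bool]
    _ = r ^ n := by
        rw [sum_prod_bool_pow n (fun b => κ (if b then B else Bᶜ) * κ (if b then B else Bᶜ))]
        simp [hr]
  have hlim : Filter.Tendsto (fun n : ℕ => r ^ n) Filter.atTop (nhds 0) :=
    ENNReal.tendsto_pow_atTop_nhds_zero_of_lt_one hr1
  exact le_zero_iff.1 (ge_of_tendsto' hlim hbound)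
end

section
/- Let G be a group and let C ≤ G be a cyclic subgroup of prime order whose normalizer N(C) = {g ∈ G : gCg⁻¹ = C} has infinite index in G. Then for every g ∈ G with g ≠ e, the set I_g = {fC ∈ G/C : gfC ≠ fC} of left cosets of C not fixed by left translation by g is infinite. -/
lemma aux_zpowers_eq {G : Type*} [Group G] (C : Subgroup G)
    (hprime : (Nat.card C).Prime) {x : G} (hx : x ∈ C) (hx1 : x ≠ 1) :
    Subgroup.zpowers x = C := by
  haveI : Fact (Nat.card C).Prime := ⟨hprime⟩
  have h : Subgroup.zpowers (⟨x, hx⟩ : C) = ⊤ :=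
    zpowers_eq_top_of_prime_card rfl
      (by intro h; exact hx1 (congrArg Subtype.val h))
  have := congrArg (Subgroup.map C.subtype) h
  rwa [MonoidHom.map_zpowers, ← MonoidHom.range_eq_map, Subgroup.range_subtype] at this

/-- If `C ≤ G` is a cyclic subgroup of prime order whose normalizer has infinite index in `G`,
then for every `g ≠ e` the set of left cosets `fC ∈ G/C` with `g f C ≠ f C` is infinite. -/
theorem infinite_nonfixed_cosets
    (G : Type*) [Group G] (C : Subgroup G)
    (hcyc : IsCyclic C) (hprime : (Nat.card C).Prime)
    (hnorm : Infinite (G ⧸ Subgroup.normalizer (C : Set G)))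
    (g : G) (hg : g ≠ 1) :
    {q : G ⧸ C | g • q ≠ q}.Infinite := by
  by_contra hfin
  rw [Set.not_infinite] at hfin
  -- the natural surjection G⧸C → G⧸N(C)
  let φ : G ⧸ C → G ⧸ Subgroup.normalizer (C : Set G) :=
    fun q => Quotient.liftOn' q (fun f => ((f : G) : G ⧸ Subgroup.normalizer (C : Set G)))
      (fun a b h => Quotient.sound'
        (QuotientGroup.leftRel_apply.mpr
          (Subgroup.le_normalizer (H := C) (QuotientGroup.leftRel_apply.mp h))))
  have hφ : ∀ f : G, φ ((f : G ⧸ C)) = (f : G ⧸ Subgroup.normalizer (C : Set G)) := fun _ => rfl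
  have hsurj : Function.Surjective φ := by
    intro q
    obtain ⟨f, rfl⟩ := QuotientGroup.mk_surjective q
    exact ⟨(f : G ⧸ C), rfl⟩
  -- fixed-point condition
  have hfix : ∀ f : G, g • (f : G ⧸ C) = (f : G ⧸ C) ↔ f⁻¹ * g⁻¹ * f ∈ C := by
    intro f
    rw [MulAction.Quotient.smul_mk, QuotientGroup.eq, smul_eq_mul]
    have he : (g * f)⁻¹ * f = (f⁻¹ * g⁻¹ * f) := by group
    rw [he]
  -- nonidentity of conjugates
  have hne1 : ∀ u : G, u⁻¹ * g⁻¹ * u ≠ 1 := by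
    intro u h1
    apply hg
    have h2 : g⁻¹ = u * 1 * u⁻¹ := by
      rw [← h1]; group
    rw [mul_one, mul_inv_cancel] at h2
    rw [← inv_inv g, h2, inv_one]
  -- key: two fixed cosets map to the same coset of the normalizer
  have key : ∀ f f₀ : G, f⁻¹ * g⁻¹ * f ∈ C → f₀⁻¹ * g⁻¹ * f₀ ∈ C →
      ((f : G ⧸ Subgroup.normalizer (C : Set G)) = (f₀ : G ⧸ Subgroup.normalizer (C : Set G))) := by
    intro f f₀ hf hf₀
    have hC : Subgroup.zpowers (f⁻¹ * g⁻¹ * f) = C := aux_zpowers_eq C hprime hf (hne1 f)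
    have hC₀ : Subgroup.zpowers (f₀⁻¹ * g⁻¹ * f₀) = C := aux_zpowers_eq C hprime hf₀ (hne1 f₀)
    rw [QuotientGroup.eq, Subgroup.mem_normalizer_iff]
    intro h
    constructor
    · intro hh
      rw [← hC₀, Subgroup.mem_zpowers_iff] at hh
      obtain ⟨n, rfl⟩ := hh
      have hac : (f⁻¹ * f₀) * (f₀⁻¹ * g⁻¹ * f₀) * (f⁻¹ * f₀)⁻¹ = f⁻¹ * g⁻¹ * f := by group
      rw [← conj_zpow, hac, ← hC]
      exact zpow_mem (Subgroup.mem_zpowers _) n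
    · intro hh
      rw [← hC, Subgroup.mem_zpowers_iff] at hh
      obtain ⟨m, hm⟩ := hh
      have hac : (f⁻¹ * f₀)⁻¹ * (f⁻¹ * g⁻¹ * f) * ((f⁻¹ * f₀)⁻¹)⁻¹ = f₀⁻¹ * g⁻¹ * f₀ := by
        group
      have he : h = (f₀⁻¹ * g⁻¹ * f₀) ^ m := by
        rw [← hac, conj_zpow, inv_inv, hm]
        group
      rw [he, ← hC₀]
      exact zpow_mem (Subgroup.mem_zpowers _) m
  -- the fixed set is nonempty (since G⧸C is infinite while the nonfixed set is finite)
  have hGC : Infinite (G ⧸ C) := Infinite.of_surjective φ hsurj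
  have hnonempty : {q : G ⧸ C | g • q = q}.Nonempty := by
    by_contra hemp
    rw [Set.not_nonempty_iff_eq_empty] at hemp
    have huniv : {q : G ⧸ C | g • q ≠ q} = Set.univ := by
      ext q
      simp only [Set.mem_setOf_eq, Set.mem_univ, iff_true]
      intro hq
      exact Set.eq_empty_iff_forall_notMem.mp hemp q hq
    rw [huniv] at hfin
    exact Set.infinite_univ hfin
  obtain ⟨q₀, hq₀⟩ := hnonempty
  obtain ⟨f₀, rfl⟩ := QuotientGroup.mk_surjective q₀
  -- every coset of the normalizer is in the image of the nonfixed set or equals f₀·N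
  have hsub : (Set.univ : Set (G ⧸ Subgroup.normalizer (C : Set G))) ⊆
      φ '' {q : G ⧸ C | g • q ≠ q} ∪ {(f₀ : G ⧸ Subgroup.normalizer (C : Set G))} := by
    intro x _
    obtain ⟨q, rfl⟩ := hsurj x
    by_cases h : g • q = q
    · right
      obtain ⟨f, rfl⟩ := QuotientGroup.mk_surjective q
      rw [hφ]
      exact key f f₀ ((hfix f).mp h) ((hfix f₀).mp hq₀)
    · exact Or.inl ⟨q, h, rfl⟩
  have hfinuniv : (Set.univ : Set (G ⧸ Subgroup.normalizer (C : Set G))).Finite :=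
    Set.Finite.subset ((hfin.image φ).union (Set.finite_singleton _)) hsub
  exact Set.infinite_univ hfinuniv
end

section
/- For any real numbers t, r with 0 < t < 1 and −t·log t − (1−t)·log(1−t) < r, there exists a standard probability space (L, λ) with an element l₁ ∈ L such that λ({l₁}) = t and H(L, λ) = r. -/
/-- A standard probability space: a standard Borel space together with a probability
measure. -/
structure StdProbSpace where
  carrier : Type
  [mble : MeasurableSpace carrier]
  [borel : StandardBorelSpace carrier]
  μ : MeasureTheory.Measure carrier
  [prob : MeasureTheory.IsProbabilityMeasure μ]

attribute [instance] StdProbSpace.mble StdProbSpace.borel StdProbSpace.prob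

open MeasureTheory ENNReal Classical

lemma discrete_measure_exists (w : ℕ → ℝ) (m : ℕ) (hnn : ∀ k, 0 ≤ w k)
    (hsupp : ∀ k, m ≤ k → w k = 0) (hsum : ∑ k ∈ Finset.range m, w k = 1) :
    ∃ μ : Measure ℕ, IsProbabilityMeasure μ ∧ (∀ k, μ {k} = ENNReal.ofReal (w k)) ∧
      shannonEntropy μ = ENNReal.ofReal (∑ k ∈ Finset.range m, Real.negMulLog (w k)) := by
  have hle1 : ∀ k, w k ≤ 1 := by
    intro k
    by_cases hk : k ∈ Finset.range m
    · calc w k ≤ ∑ j ∈ Finset.range m, w j :=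
          Finset.single_le_sum (fun j _ => hnn j) hk
        _ = 1 := hsum
    · rw [hsupp k (by simpa using hk)]; norm_num
  have hhs : HasSum (fun k => ENNReal.ofReal (w k)) 1 := by
    have := hasSum_sum_of_ne_finset_zero (s := Finset.range m) (L := SummationFilter.unconditional ℕ)
      (f := fun k => ENNReal.ofReal (w k))
      (by intro b hb; simp [hsupp b (by simpa using hb)])
    rwa [← ENNReal.ofReal_sum_of_nonneg (fun i _ => hnn i), hsum, ENNReal.ofReal_one] at this
  set p : PMF ℕ := ⟨fun k => ENNReal.ofReal (w k), hhs⟩ with hp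
  refine ⟨p.toMeasure, PMF.toMeasure.isProbabilityMeasure p, ?_, ?_⟩
  · intro k
    rw [PMF.toMeasure_apply_singleton _ _ (measurableSet_singleton k)]
    rfl
  · have hsing : ∀ k, p.toMeasure {k} = ENNReal.ofReal (w k) := by
      intro k
      rw [PMF.toMeasure_apply_singleton _ _ (measurableSet_singleton k)]; rfl
    rw [shannonEntropy, if_pos ⟨Set.univ, Set.countable_univ, measure_univ⟩]
    have hterm : ∀ k, ENNReal.ofReal (-((p.toMeasure {k}).toReal *
        Real.log (p.toMeasure {k}).toReal)) = ENNReal.ofReal (Real.negMulLog (w k)) := by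
      intro k
      rw [hsing k, ENNReal.toReal_ofReal (hnn k), Real.negMulLog]
      ring_nf
    calc ∑' k : ℕ, ENNReal.ofReal (-((p.toMeasure {k}).toReal *
          Real.log (p.toMeasure {k}).toReal))
        = ∑' k : ℕ, ENNReal.ofReal (Real.negMulLog (w k)) := by
          exact tsum_congr hterm
      _ = ∑ k ∈ Finset.range m, ENNReal.ofReal (Real.negMulLog (w k)) := by
          refine tsum_eq_sum ?_
          intro b hb
          rw [hsupp b (by simpa using hb), Real.negMulLog_zero, ENNReal.ofReal_zero]
      _ = ENNReal.ofReal (∑ k ∈ Finset.range m, Real.negMulLog (w k)) :=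
          (ENNReal.ofReal_sum_of_nonneg
            (fun i _ => Real.negMulLog_nonneg (hnn i) (hle1 i))).symm

/-- **Lemma 5.2.** For any real `t, r` with `0 < t < 1` and `H(t, 1-t) < r`, there is a
standard probability space `(L, λ)` with an element `l₁ ∈ L` such that `λ({l₁}) = t` and
`H(L, λ) = r`. -/
theorem exists_space_with_atom_and_entropy
    (t r : ℝ) (ht0 : 0 < t) (ht1 : t < 1)
    (hr : -(t * Real.log t) - (1 - t) * Real.log (1 - t) < r) :
    ∃ (P : StdProbSpace) (l₁ : P.carrier),
      P.μ {l₁} = ENNReal.ofReal t ∧ shannonEntropy P.μ = ENNReal.ofReal r := by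
  have ht1' : (0:ℝ) < 1 - t := by linarith
  have hH : Real.negMulLog t + Real.negMulLog (1 - t) < r := by
    rw [Real.negMulLog, Real.negMulLog]; linarith
  set H : ℝ := Real.negMulLog t + Real.negMulLog (1 - t) with hHdef
  set s : ℝ := (r - H) / (1 - t) with hsdef
  have hs0 : 0 < s := div_pos (by linarith) ht1'
  set n : ℕ := ⌈Real.exp s⌉₊ with hndef
  set N : ℝ := (n : ℝ) + 1 with hNdef
  have hN0 : (0:ℝ) < N := by positivity
  have hsleN : s ≤ Real.log N := by
    rw [Real.le_log_iff_exp_le hN0]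
    have := Nat.le_ceil (Real.exp s)
    rw [hNdef]; linarith
  -- the entropy function on [0,1]
  set g : ℝ → ℝ := fun θ =>
    Real.negMulLog (1 - θ + θ / N) + n * Real.negMulLog (θ / N) with hgdef
  have hgc : Continuous g := by
    apply Continuous.add
    · exact Real.continuous_negMulLog.comp (by continuity)
    · exact continuous_const.mul (Real.continuous_negMulLog.comp (by continuity))
  have hg0 : g 0 = 0 := by
    simp [hgdef, Real.negMulLog_one, Real.negMulLog_zero]
  have hg1 : g 1 = Real.log N := by
    have h1N : (1:ℝ) - 1 + 1 / N = 1 / N := by ring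
    rw [hgdef]
    simp only [h1N]
    have : Real.negMulLog (1 / N) = -(1 / N) * Real.log (1 / N) := by
      rw [Real.negMulLog]
    rw [this, Real.log_div one_ne_zero (ne_of_gt hN0), Real.log_one]
    field_simp
    rw [hNdef]
    ring
  obtain ⟨θ, hθmem, hθ⟩ : ∃ θ ∈ Set.Icc (0:ℝ) 1, g θ = s := by
    have := intermediate_value_Icc (by norm_num : (0:ℝ) ≤ 1) hgc.continuousOn
    have hmem : s ∈ Set.Icc (g 0) (g 1) := by
      rw [hg0, hg1]; exact ⟨le_of_lt hs0, hsleN⟩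
    obtain ⟨θ, hθ1, hθ2⟩ := this hmem
    exact ⟨θ, hθ1, hθ2⟩
  obtain ⟨hθ0, hθ1⟩ := hθmem
  set a : ℝ := 1 - θ + θ / N with hadef
  set b : ℝ := θ / N with hbdef
  have hb0 : 0 ≤ b := div_nonneg hθ0 (le_of_lt hN0)
  have ha0 : 0 ≤ a := by
    have : 0 ≤ 1 - θ := by linarith
    rw [hadef]; linarith [hb0]
  have hab : a + n * b = 1 := by
    rw [hadef, hbdef]
    field_simp
    ring
  -- weights
  set w : ℕ → ℝ := fun k =>
    if k = 0 then t else if k = 1 then (1 - t) * a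
    else if k < n + 2 then (1 - t) * b else 0 with hwdef
  have hnn : ∀ k, 0 ≤ w k := by
    intro k
    rw [hwdef]
    dsimp only
    split_ifs
    · exact le_of_lt ht0
    · exact mul_nonneg (le_of_lt ht1') ha0
    · exact mul_nonneg (le_of_lt ht1') hb0
    · exact le_refl 0
  have hsupp : ∀ k, n + 2 ≤ k → w k = 0 := by
    intro k hk
    rw [hwdef]
    dsimp only
    rw [if_neg (by omega), if_neg (by omega), if_neg (by omega)]
  -- generic sum computation
  have hsumgen : ∀ f : ℝ → ℝ, ∑ k ∈ Finset.range (n + 2), f (w k)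
      = f t + f ((1 - t) * a) + n * f ((1 - t) * b) := by
    intro f
    rw [Finset.sum_range_succ', Finset.sum_range_succ']
    have h0 : w 0 = t := by simp [hwdef]
    have h1 : w 1 = (1 - t) * a := by simp [hwdef]
    have h2 : ∀ k ∈ Finset.range n, f (w (k + 1 + 1)) = f ((1 - t) * b) := by
      intro k hk
      have hk' : k < n := Finset.mem_range.mp hk
      have : w (k + 1 + 1) = (1 - t) * b := by
        rw [hwdef]
        dsimp only
        rw [if_neg (by omega), if_neg (by omega), if_pos (by omega)]
      rw [this]
    rw [Finset.sum_congr rfl h2, Finset.sum_const, Finset.card_range, h0, h1]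
    -- push_cast not needed
    ring
  have hsum : ∑ k ∈ Finset.range (n + 2), w k = 1 := by
    have := hsumgen id
    simp only [id] at this
    rw [this]
    linear_combination (1 - t) * hab
  obtain ⟨μ, hprob, hsing, hent⟩ := discrete_measure_exists w (n + 2) hnn hsupp hsum
  have hentval : ∑ k ∈ Finset.range (n + 2), Real.negMulLog (w k) = r := by
    rw [hsumgen Real.negMulLog]
    rw [Real.negMulLog_mul, Real.negMulLog_mul]
    have hgθ : Real.negMulLog a + n * Real.negMulLog b = s := by
      rw [← hθ, hgdef]
    have hts : (1 - t) * s = r - H := by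
      rw [hsdef]; field_simp
    linear_combination (1 - t) * hgθ + hts + Real.negMulLog (1 - t) * hab - hHdef
  haveI := hprob
  refine ⟨⟨ℕ, μ⟩, 0, ?_, ?_⟩
  · rw [hsing 0]
    simp [hwdef]
  · rw [hent, hentval]
end

section
/- Let p ≥ 2 be a prime and let (K, κ) be the two-point probability space K = {k₀, k₁} with κ({k₀}) = ε and κ({k₁}) = 1 − ε, where 0 < ε ≤ 1/2. Then there exist: a standard probability space (L, λ) that is not a two-atom space with H(L, λ) = H(K, κ); a standard probability space (M, μ) with H(M, μ) > 0; and measurable maps α : K^p → M and β : L^p → M such that α_*κ^p = β_*λ^p = μ, α ∘ σ_K = α, and β ∘ σ_L = β, where σ_K is the cyclic shift σ_K(x₀, …, x_{p−1}) = (x₁, …, x_{p−1}, x₀) on K^p, σ_L is the analogous cyclic shift on L^p, and κ^p, λ^p are the p-fold product measures. -/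
open MeasureTheory ENNReal Classical

open Real in
lemma aux_exists_dist (c h : ℝ) (hc0 : 0 < c) (hc1 : c < 1)
    (hlt : negMulLog c + negMulLog (1-c) < h) :
    ∃ (n : ℕ) (q : ℕ → ℝ), 2 ≤ n ∧ q 0 = c ∧ (∀ i, 0 ≤ q i) ∧ (∀ i, n < i → q i = 0) ∧
      0 < q 1 ∧ 0 < q 2 ∧ (∑ i ∈ Finset.range (n+1), q i) = 1 ∧
      (∑ i ∈ Finset.range (n+1), negMulLog (q i)) = h := by
  have h1c : (0:ℝ) < 1 - c := by linarith
  set n : ℕ := max 2 ⌈Real.exp (h/(1-c))⌉₊ with hn_def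
  have hn2 : 2 ≤ n := le_max_left _ _
  have hnpos : (0:ℝ) < n := by positivity
  have hexp_le : Real.exp (h/(1-c)) ≤ n := by
    calc Real.exp (h/(1-c)) ≤ ⌈Real.exp (h/(1-c))⌉₊ := Nat.le_ceil _
    _ ≤ n := by exact_mod_cast le_max_right _ _
  have hlogn : h ≤ (1-c) * Real.log n := by
    have : h/(1-c) ≤ Real.log n := by
      rw [← Real.log_exp (h/(1-c))]
      exact Real.log_le_log (Real.exp_pos _) hexp_le
    calc h = (1-c) * (h/(1-c)) := by field_simp
    _ ≤ (1-c) * Real.log n := by nlinarith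
  have hcast : ((n-1 : ℕ) : ℝ) = (n:ℝ) - 1 := by
    have h1n : 1 ≤ n := by omega
    push_cast [Nat.cast_sub h1n]
    ring
  set F : ℝ → ℝ := fun s => negMulLog c + negMulLog ((1-c)*(1 - s + s/n))
      + ((n-1 : ℕ) : ℝ) * negMulLog ((1-c)*s/n) with hF_def
  have hFcont : Continuous F := by
    apply Continuous.add
    apply Continuous.add continuous_const
    · exact continuous_negMulLog.comp (by continuity)
    · exact continuous_const.mul (continuous_negMulLog.comp (by continuity))
  have hF0 : F 0 = negMulLog c + negMulLog (1-c) := by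
    simp [hF_def]
  have hF1 : h ≤ F 1 := by
    have hq : negMulLog ((1-c)/n) = ((1-c)/n) * (Real.log n - Real.log (1-c)) := by
      rw [negMulLog, Real.log_div (by linarith) (by positivity)]
      ring
    have hlog1c : Real.log (1-c) ≤ 0 := Real.log_nonpos (by linarith) (by linarith)
    have : F 1 = negMulLog c + (n:ℝ) * negMulLog ((1-c)/n) := by
      simp only [hF_def, hcast]
      rw [show (1-c)*(1 - 1 + 1/(n:ℝ)) = (1-c)/n by ring,
        show (1-c)*1/(n:ℝ) = (1-c)/n by ring]
      ring
    rw [this, hq]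
    have hnm : (n:ℝ) * (((1-c)/n) * (Real.log n - Real.log (1-c)))
        = (1-c)*(Real.log n - Real.log (1-c)) := by field_simp
    rw [hnm]
    have h3 : (0:ℝ) ≤ negMulLog c := negMulLog_nonneg hc0.le hc1.le
    nlinarith
  have hmem : h ∈ Set.Icc (F 0) (F 1) := ⟨by rw [hF0]; exact hlt.le, hF1⟩
  obtain ⟨s, hs01, hFs⟩ := intermediate_value_Icc (by norm_num : (0:ℝ) ≤ 1)
    hFcont.continuousOn hmem
  obtain ⟨hs0, hs1⟩ := hs01
  have hspos : 0 < s := by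
    rcases lt_or_eq_of_le hs0 with h' | h'
    · exact h'
    · exfalso; rw [← h'] at hFs; rw [hF0] at hFs; linarith
  have hsn : 0 < s/(n:ℝ) := by positivity
  have ht1 : 0 < 1 - s + s/n := by nlinarith
  set q : ℕ → ℝ := fun i => if i = 0 then c else if i = 1 then (1-c)*(1 - s + s/n)
      else if i ≤ n then (1-c)*s/n else 0 with hq_def
  have hdecomp : Finset.range (n+1) = insert 0 (insert 1 (Finset.Icc 2 n)) := by
    ext i
    simp only [Finset.mem_range, Finset.mem_insert, Finset.mem_Icc]
    omega
  have h0ni : (0:ℕ) ∉ insert 1 (Finset.Icc 2 n) := by simp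
  have h1ni : (1:ℕ) ∉ Finset.Icc 2 n := by simp
  have hcard : (Finset.Icc 2 n).card = n - 1 := by
    rw [Nat.card_Icc]; omega
  have hconst : ∀ i ∈ Finset.Icc 2 n, q i = (1-c)*s/n := by
    intro i hi
    simp only [Finset.mem_Icc] at hi
    have : i ≠ 0 := by omega
    have h1' : i ≠ 1 := by omega
    simp [hq_def, this, h1', hi.2]
  have hq1v : q 1 = (1-c)*(1 - s + s/n) := by simp [hq_def]
  have hq2v : q 2 = (1-c)*s/n := by
    have : (2:ℕ) ≤ n := hn2
    simp [hq_def, this]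
  refine ⟨n, q, hn2, by simp [hq_def], ?_, ?_, ?_, ?_, ?_, ?_⟩
  · intro i
    simp only [hq_def]
    split_ifs
    · exact hc0.le
    · positivity
    · positivity
    · exact le_refl 0
  · intro i hi
    have h0' : i ≠ 0 := by omega
    have h1' : i ≠ 1 := by omega
    have h2' : ¬ i ≤ n := by omega
    simp [hq_def, h0', h1', h2']
  · rw [hq1v]; positivity
  · rw [hq2v]; positivity
  · rw [hdecomp, Finset.sum_insert h0ni, Finset.sum_insert h1ni,
      Finset.sum_congr rfl hconst, Finset.sum_const, hcard, nsmul_eq_mul, hcast,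
      hq1v, show q 0 = c from by simp [hq_def]]
    field_simp
    ring
  · rw [hdecomp, Finset.sum_insert h0ni, Finset.sum_insert h1ni,
      Finset.sum_congr rfl (fun i hi => by rw [hconst i hi]), Finset.sum_const, hcard,
      nsmul_eq_mul, hcast, hq1v, show q 0 = c from by simp [hq_def]]
    have hFs' := hFs
    simp only [hF_def, hcast] at hFs'
    linarith

open Real in
lemma aux_H2_lt (ε c : ℝ) (hε0 : 0 < ε) (hε : ε ≤ 1/2) (hc : 1 - ε < c) (hc1 : c < 1) :
    negMulLog c + negMulLog (1-c) < negMulLog ε + negMulLog (1-ε) := by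
  rw [← binEntropy_eq_negMulLog_add_negMulLog_one_sub,
    ← binEntropy_eq_negMulLog_add_negMulLog_one_sub, ← binEntropy_one_sub c]
  exact binEntropy_strictMonoOn ⟨by linarith, by norm_num; linarith⟩
    ⟨hε0.le, by norm_num; linarith⟩ (by linarith)

noncomputable def auxMap {ι γ : Type*} [Zero γ] (v w : Fin 2) (y : ι → γ) : Fin 2 :=
  if ∀ i, y i = 0 then v else w

lemma auxMap_preimage_self {ι γ : Type*} [Zero γ] (v w : Fin 2) (hvw : w ≠ v) :
    auxMap (ι := ι) (γ := γ) v w ⁻¹' {v} = {y : ι → γ | ∀ i, y i = 0} := by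
  ext y
  by_cases hy : ∀ i, y i = 0 <;> simp [auxMap, hy, hvw]

lemma auxMap_preimage_other {ι γ : Type*} [Zero γ] (v w : Fin 2) (hvw : v ≠ w) :
    auxMap (ι := ι) (γ := γ) v w ⁻¹' {w} = {y : ι → γ | ∀ i, y i = 0}ᶜ := by
  ext y
  by_cases hy : ∀ i, y i = 0 <;> simp [auxMap, hy, hvw]

lemma auxMap_rotate {p : ℕ} {γ : Type*} [Zero γ] (v w : Fin 2) (y : Fin p → γ) :
    auxMap v w (y ∘ finRotate p) = auxMap v w y := by
  by_cases hy : ∀ i, y i = 0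
  · have hy' : ∀ i, (y ∘ finRotate p) i = 0 := fun i => hy _
    simp only [auxMap, if_pos hy, if_pos hy']
  · have hy' : ¬ ∀ i, (y ∘ finRotate p) i = 0 := by
      intro hvv
      apply hy
      intro i
      obtain ⟨j, rfl⟩ := (finRotate p).surjective i
      exact hvv j
    simp only [auxMap, if_neg hy, if_neg hy']

lemma aux_cylinder_measure {p : ℕ} {γ : Type*} [MeasurableSpace γ] (ν : Measure γ)
    [IsProbabilityMeasure ν] (z : γ) :
    (Measure.pi fun _ : Fin p => ν) {y : Fin p → γ | ∀ i, y i = z} = ν {z} ^ p := by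
  have : {y : Fin p → γ | ∀ i, y i = z} = Set.pi Set.univ (fun _ : Fin p => {z}) := by
    ext y; simp [Set.mem_pi]
  rw [this, Measure.pi_pi]
  simp [Finset.prod_const]

/-- The claim in the proof of Theorem 1.3: for a prime `p` and a two-point probability space
`(K, κ)` with masses `ε` and `1 - ε` (`0 < ε ≤ 1/2`), there exist a standard probability space
`(L, λ)` which is not a two-atom space with `H(L, λ) = H(K, κ)`, a nontrivial standard
probability space `(M, μ)`, and measurable factor maps `α : K^p → M`, `β : L^p → M` with
`α_* κ^p = β_* λ^p = μ` which are invariant under the cyclic shifts `σ_K`, `σ_L`. -/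
theorem exists_cyclic_shift_invariant_common_factor
    (p : ℕ) (hp : p.Prime) (ε : ℝ) (hε0 : 0 < ε) (hε : ε ≤ 1 / 2)
    (κ : Measure (Fin 2)) [IsProbabilityMeasure κ]
    (h0 : κ {0} = ENNReal.ofReal ε) (h1 : κ {1} = ENNReal.ofReal (1 - ε)) :
    ∃ (P Q : StdProbSpace) (α : (Fin p → Fin 2) → Q.carrier)
      (β : (Fin p → P.carrier) → Q.carrier),
      ¬ IsTwoAtomSpace P.μ ∧ shannonEntropy P.μ = shannonEntropy κ ∧
      0 < shannonEntropy Q.μ ∧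
      Measurable α ∧ Measurable β ∧
      Measure.map α (Measure.pi fun _ : Fin p => κ) = Q.μ ∧
      Measure.map β (Measure.pi fun _ : Fin p => P.μ) = Q.μ ∧
      (∀ x : Fin p → Fin 2, α (x ∘ finRotate p) = α x) ∧
      (∀ y : Fin p → P.carrier, β (y ∘ finRotate p) = β y) := by
  have hp2 : 2 ≤ p := hp.two_le
  have hε1 : ε < 1 := by linarith
  have hεppos : 0 < ε ^ p := pow_pos hε0 p
  have hεplt : ε ^ p < ε := by
    calc ε ^ p ≤ ε ^ 2 := pow_le_pow_of_le_one hε0.le hε1.le hp2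
    _ < ε := by nlinarith
  have h1εle : (1 - ε) ^ p ≤ 1 - ε := pow_le_of_le_one (by linarith) (by linarith) (by omega)
  have hεplt1 : ε ^ p < 1 := by linarith
  set c : ℝ := (1 - ε ^ p) ^ (p : ℝ)⁻¹ with hc_def
  have hbase : 0 < 1 - ε ^ p := by linarith
  have hc0 : 0 < c := Real.rpow_pos_of_pos hbase _
  have hppos : (0:ℝ) < (p:ℝ) := by exact_mod_cast hp.pos
  have hc_pow : c ^ p = 1 - ε ^ p := by
    rw [hc_def, ← Real.rpow_natCast ((1 - ε ^ p) ^ (p:ℝ)⁻¹) p, ← Real.rpow_mul hbase.le]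
    rw [inv_mul_cancel₀ (ne_of_gt hppos), Real.rpow_one]
  have hc1 : c < 1 := by
    rw [hc_def]
    exact Real.rpow_lt_one hbase.le (by linarith) (inv_pos.mpr hppos)
  have hcgt : 1 - ε < c := by
    have h2 : (1 - ε) ^ p < 1 - ε ^ p := by nlinarith
    have := Real.rpow_lt_rpow (pow_nonneg (by linarith) p) h2 (inv_pos.mpr hppos)
    rwa [← Real.rpow_natCast (1-ε) p, ← Real.rpow_mul (by linarith),
      mul_inv_cancel₀ (ne_of_gt hppos), Real.rpow_one] at this
  have hH2 := aux_H2_lt ε c hε0 hε hcgt hc1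
  set h : ℝ := Real.negMulLog ε + Real.negMulLog (1-ε) with hh_def
  obtain ⟨n, q, hn2, hq0, hqnn, hqz, hq1, hq2, hqsum, hqent⟩ :=
    aux_exists_dist c h hc0 hc1 hH2
  have hqle1 : ∀ i, q i ≤ 1 := by
    intro i
    by_cases hi : i ∈ Finset.range (n+1)
    · calc q i ≤ ∑ j ∈ Finset.range (n+1), q j :=
        Finset.single_le_sum (fun j _ => hqnn j) hi
      _ = 1 := hqsum
    · rw [hqz i (by simp only [Finset.mem_range] at hi; omega)]
      norm_num
  have hsum' : ∑ i ∈ Finset.range (n+1), ENNReal.ofReal (q i) = 1 := by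
    rw [← ENNReal.ofReal_sum_of_nonneg (fun i _ => hqnn i), hqsum, ENNReal.ofReal_one]
  let pmfP : PMF ℕ := PMF.ofFinset (fun i => ENNReal.ofReal (q i)) (Finset.range (n+1))
    hsum' (fun a ha => by
      show ENNReal.ofReal (q a) = 0
      rw [hqz a (by simp only [Finset.mem_range] at ha; omega)]
      exact ENNReal.ofReal_zero)
  let P : StdProbSpace := { carrier := ℕ, μ := pmfP.toMeasure }
  have hPsing : ∀ k : ℕ, P.μ {k} = ENNReal.ofReal (q k) := fun k =>
    PMF.toMeasure_apply_singleton pmfP k (measurableSet_singleton k)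
  -- Q
  let μQ : Measure (Fin 2) := ENNReal.ofReal (ε^p) • Measure.dirac 0
      + ENNReal.ofReal (1 - ε^p) • Measure.dirac 1
  have hμQ0 : μQ {0} = ENNReal.ofReal (ε^p) := by
    simp [μQ, Measure.dirac_apply]
  have hμQ1 : μQ {1} = ENNReal.ofReal (1 - ε^p) := by
    simp [μQ, Measure.dirac_apply]
  have hμQuniv : μQ Set.univ = 1 := by
    simp only [μQ, Measure.add_apply, Measure.smul_apply, measure_univ, smul_eq_mul, mul_one]
    rw [← ENNReal.ofReal_add (le_of_lt hεppos) (by linarith)]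
    norm_num
  haveI hQprob : IsProbabilityMeasure μQ := ⟨hμQuniv⟩
  let Q : StdProbSpace := { carrier := Fin 2, μ := μQ }
  -- entropy computations
  have hnegrw : ∀ t : ℝ, -(t * Real.log t) = Real.negMulLog t := fun t => by
    rw [Real.negMulLog, neg_mul]
  have hEntκ : shannonEntropy κ = ENNReal.ofReal h := by
    rw [shannonEntropy, if_pos (⟨Set.univ, Set.countable_univ, measure_univ⟩ :
      ∃ S : Set (Fin 2), S.Countable ∧ κ S = 1)]
    rw [tsum_fintype, Fin.sum_univ_two, h0, h1,
      ENNReal.toReal_ofReal hε0.le, ENNReal.toReal_ofReal (by linarith : (0:ℝ) ≤ 1 - ε),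
      hnegrw, hnegrw, ← ENNReal.ofReal_add (Real.negMulLog_nonneg hε0.le hε1.le)
        (Real.negMulLog_nonneg (by linarith) (by linarith))]
  have hEntP : shannonEntropy P.μ = ENNReal.ofReal h := by
    rw [shannonEntropy, if_pos (⟨Set.univ, Set.countable_univ, measure_univ⟩ :
      ∃ S : Set ℕ, S.Countable ∧ P.μ S = 1)]
    have hterm : ∀ k : ℕ, ENNReal.ofReal (-((P.μ {k}).toReal * Real.log (P.μ {k}).toReal))
        = ENNReal.ofReal (Real.negMulLog (q k)) := by
      intro k
      rw [hPsing k, ENNReal.toReal_ofReal (hqnn k), hnegrw]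
    rw [tsum_congr hterm, tsum_eq_sum (s := Finset.range (n+1))
      (fun b hb => by
        rw [hqz b (by simp only [Finset.mem_range] at hb; omega), Real.negMulLog_zero,
          ENNReal.ofReal_zero]),
      ← ENNReal.ofReal_sum_of_nonneg
        (fun i _ => Real.negMulLog_nonneg (hqnn i) (hqle1 i)), hqent]
  have hEntQ : 0 < shannonEntropy μQ := by
    rw [shannonEntropy, if_pos (⟨Set.univ, Set.countable_univ, hμQuniv⟩ :
      ∃ S : Set (Fin 2), S.Countable ∧ μQ S = 1)]
    rw [tsum_fintype, Fin.sum_univ_two, hμQ0, hμQ1,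
      ENNReal.toReal_ofReal hεppos.le, ENNReal.toReal_ofReal (by linarith : (0:ℝ) ≤ 1 - ε^p),
      hnegrw, hnegrw]
    have hpos : 0 < Real.negMulLog (ε^p) := by
      rw [Real.negMulLog]
      have hl := Real.log_neg hεppos hεplt1
      nlinarith
    exact lt_of_lt_of_le (ENNReal.ofReal_pos.mpr hpos) le_self_add
  -- cylinders
  have hκcyl : (Measure.pi fun _ : Fin p => κ) {x : Fin p → Fin 2 | ∀ i, x i = 0}
      = ENNReal.ofReal (ε^p) := by
    rw [aux_cylinder_measure κ 0, h0, ← ENNReal.ofReal_pow hε0.le]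
  have hPcyl : (Measure.pi fun _ : Fin p => P.μ) {y : Fin p → ℕ | ∀ i, y i = 0}
      = ENNReal.ofReal (1 - ε^p) := by
    rw [aux_cylinder_measure P.μ 0, hPsing 0, hq0, ← ENNReal.ofReal_pow hc0.le, hc_pow]
  have hmsK : MeasurableSet {x : Fin p → Fin 2 | ∀ i, x i = 0} := by
    have : {x : Fin p → Fin 2 | ∀ i, x i = 0} = Set.pi Set.univ (fun _ => {0}) := by
      ext x; simp [Set.mem_pi]
    rw [this]
    exact MeasurableSet.univ_pi (fun i => measurableSet_singleton 0)
  have hmsP : MeasurableSet {y : Fin p → ℕ | ∀ i, y i = 0} := by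
    have : {y : Fin p → ℕ | ∀ i, y i = 0} = Set.pi Set.univ (fun _ => {0}) := by
      ext y; simp [Set.mem_pi]
    rw [this]
    exact MeasurableSet.univ_pi (fun i => measurableSet_singleton 0)
  have hone_sub : (1:ℝ≥0∞) - ENNReal.ofReal (ε^p) = ENNReal.ofReal (1 - ε^p) := by
    rw [← ENNReal.ofReal_one, ← ENNReal.ofReal_sub _ hεppos.le]
  have hone_sub' : (1:ℝ≥0∞) - ENNReal.ofReal (1 - ε^p) = ENNReal.ofReal (ε^p) := by
    rw [← ENNReal.ofReal_one, ← ENNReal.ofReal_sub _ (by linarith : (0:ℝ) ≤ 1 - ε^p)]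
    norm_num
  have hαm : Measurable (auxMap 0 1 : (Fin p → Fin 2) → Fin 2) := measurable_of_countable _
  have hβm : Measurable (auxMap 1 0 : (Fin p → ℕ) → Fin 2) := measurable_of_countable _
  have hmapα : Measure.map (auxMap 0 1) (Measure.pi fun _ : Fin p => κ) = μQ := by
    apply Measure.ext_of_singleton
    intro a
    rw [Measure.map_apply hαm (measurableSet_singleton a)]
    fin_cases a
    · show (Measure.pi fun _ : Fin p => κ) (auxMap 0 1 ⁻¹' {0}) = μQ {0}
      rw [auxMap_preimage_self 0 1 (by decide), hκcyl, hμQ0]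
    · show (Measure.pi fun _ : Fin p => κ) (auxMap 0 1 ⁻¹' {1}) = μQ {1}
      rw [auxMap_preimage_other 0 1 (by decide), prob_compl_eq_one_sub hmsK, hκcyl,
        hone_sub, hμQ1]
  have hmapβ : Measure.map (auxMap 1 0) (Measure.pi fun _ : Fin p => P.μ) = μQ := by
    apply Measure.ext_of_singleton
    intro a
    rw [Measure.map_apply hβm (measurableSet_singleton a)]
    fin_cases a
    · show (Measure.pi fun _ : Fin p => P.μ) (auxMap 1 0 ⁻¹' {0}) = μQ {0}
      rw [auxMap_preimage_other 1 0 (by decide), prob_compl_eq_one_sub hmsP, hPcyl,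
        hone_sub', hμQ0]
    · show (Measure.pi fun _ : Fin p => P.μ) (auxMap 1 0 ⁻¹' {1}) = μQ {1}
      rw [auxMap_preimage_self 1 0 (by decide), hPcyl, hμQ1]
  refine ⟨P, Q, auxMap 0 1, auxMap 1 0, ?_, hEntP.trans hEntκ.symm, hEntQ, hαm, hβm,
    hmapα, hmapβ, fun x => auxMap_rotate 0 1 x, fun y => auxMap_rotate 1 0 y⟩
  show ¬ IsTwoAtomSpace (K := ℕ) pmfP.toMeasure
  have hPsing2 : ∀ k : ℕ, pmfP.toMeasure {k} = ENNReal.ofReal (q k) := fun k =>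
    PMF.toMeasure_apply_singleton pmfP k (measurableSet_singleton k)
  rintro ⟨k₀, k₁, hk⟩
  have hj : ∃ j : ℕ, j ≤ 2 ∧ j ≠ k₀ ∧ j ≠ k₁ := by
    by_cases ha : k₀ = 0
    · by_cases hb : k₁ = 1
      · exact ⟨2, by omega, by omega, by omega⟩
      · exact ⟨1, by omega, by omega, by omega⟩
    · by_cases hb : k₁ = 0
      · by_cases hcc : k₀ = 1
        · exact ⟨2, by omega, by omega, by omega⟩
        · exact ⟨1, by omega, by omega, by omega⟩
      · exact ⟨0, by omega, by omega, by omega⟩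
  obtain ⟨j, hj2, hjk₀, hjk₁⟩ := hj
  have hjpos : 0 < pmfP.toMeasure {j} := by
    interval_cases j
    · rw [hPsing2]
      exact ENNReal.ofReal_pos.mpr (hq0 ▸ hc0)
    · rw [hPsing2]
      exact ENNReal.ofReal_pos.mpr hq1
    · rw [hPsing2]
      exact ENNReal.ofReal_pos.mpr hq2
  have hsub : pmfP.toMeasure {k₀, k₁} ≤ pmfP.toMeasure ({j}ᶜ) := by
    apply measure_mono
    intro x hx
    rcases hx with rfl | rfl
    · simp only [Set.mem_compl_iff, Set.mem_singleton_iff]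
      omega
    · simp only [Set.mem_compl_iff, Set.mem_singleton_iff]
      omega
  rw [prob_compl_eq_one_sub (measurableSet_singleton j), hk] at hsub
  have hlt : (1:ℝ≥0∞) - pmfP.toMeasure {j} < 1 :=
    ENNReal.sub_lt_self one_ne_top one_ne_zero (ne_of_gt hjpos)
  exact absurd (lt_of_le_of_lt hsub hlt) (lt_irrefl 1)
end
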